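/- Let V = C₀(K, ℂ) with triple product {x,y,z} = x conj(y) z, let a ∈ V, and let (ρ_γ) be a net of triple homomorphisms V → ℂ and ρ a triple homomorphism with ρ(a) ≠ 0. If ρ_γ(w) → ρ(w) for every w of the form a·conj(a)·v (v ∈ V) and ρ_γ(a) → ρ(a), then ρ_γ(v) → ρ(v) for every v ∈ V. -/

import Mathlib

open scoped ZeroAtInfty
open Filter

/-- If a net of triple homomorphisms `ρ_γ : C₀(K, ℂ) → ℂ` converges to a triple
homomorphism `ρ` with `ρ a ≠ 0` on `a` and on all elements `a ⬝ conj a ⬝ v`,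
then `ρ_γ(v) → ρ(v)` for every `v`. -/
theorem stmt_10 {K : Type*} [TopologicalSpace K] [LocallyCompactSpace K] [T2Space K]
    {ι : Type*} (l : Filter ι) [l.NeBot]
    (ρs : ι → (C₀(K, ℂ) →ₗ[ℂ] ℂ)) (ρ : C₀(K, ℂ) →ₗ[ℂ] ℂ)
    (hρs : ∀ γ, ∀ x y z : C₀(K, ℂ),
      ρs γ (x * star y * z) = ρs γ x * (starRingEnd ℂ) (ρs γ y) * ρs γ z)
    (hρ : ∀ x y z : C₀(K, ℂ),
      ρ (x * star y * z) = ρ x * (starRingEnd ℂ) (ρ y) * ρ z)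
    (a : C₀(K, ℂ)) (hne : ρ a ≠ 0)
    (hconv : ∀ v : C₀(K, ℂ),
      Tendsto (fun γ => ρs γ (a * star a * v)) l (nhds (ρ (a * star a * v))))
    (hconva : Tendsto (fun γ => ρs γ a) l (nhds (ρ a))) :
    ∀ v : C₀(K, ℂ), Tendsto (fun γ => ρs γ v) l (nhds (ρ v)) := by
  intro v
  have hden : ρ a * (starRingEnd ℂ) (ρ a) ≠ 0 :=
    mul_ne_zero hne (by simpa using hne)
  have hlim : Tendsto (fun γ => ρs γ (a * star a * v) / (ρs γ a * (starRingEnd ℂ) (ρs γ a)))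
      l (nhds (ρ (a * star a * v) / (ρ a * (starRingEnd ℂ) (ρ a)))) :=
    (hconv v).div (hconva.mul ((Complex.continuous_conj.tendsto _).comp hconva)) hden
  have heq : ρ (a * star a * v) / (ρ a * (starRingEnd ℂ) (ρ a)) = ρ v := by
    rw [hρ a a v]
    field_simp
    exact mul_div_cancel_left₀ _ (by simpa using hne)
  rw [heq] at hlim
  have hev : ∀ᶠ γ in l, ρs γ a ≠ 0 := hconva (isOpen_ne.mem_nhds hne)
  refine hlim.congr' ?_
  filter_upwards [hev] with γ hγ
  rw [hρs γ a a v]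
  exact mul_div_cancel_left₀ _ (mul_ne_zero hγ (by simpa using hγ))
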